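/- Let x be a Lyndon word and let u, v be proper non-empty prefixes of x with u^∞ = v^∞ and |u| > |v|. Then for any e ≥ 1, (x^e u)^∞ < (x^e v)^∞, hence x^e u ≺ x^e v in the infinite ordering. -/

import Mathlib

variable {α : Type*} [LinearOrder α] [Inhabited α]

/-- A Lyndon word: a non-empty word strictly lexicographically smaller than
all its proper non-empty suffixes. -/
def IsLyndon (w : List α) : Prop :=
  w ≠ [] ∧ ∀ v : List α, v ≠ [] → v ≠ w → v <:+ w → List.Lex (· < ·) w v

/-- `wpow x k` is the word `x` repeated `k` times. -/
def wpow (x : List α) (k : ℕ) : List α := (List.replicate k x).flatten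

/-- `infWord x` is the infinite word `x^∞` (junk value if `x = []`). -/
def infWord (x : List α) : ℕ → α := fun i => x.getD (i % x.length) default

/-- Strict lexicographic order on infinite words. -/
def InfLt (f g : ℕ → α) : Prop := ∃ n, (∀ i < n, f i = g i) ∧ f n < g n

/-- The infinite ordering `≺` on non-empty words. -/
def Prec (u v : List α) : Prop :=
  InfLt (infWord u) (infWord v) ∨ (infWord u = infWord v ∧ v.length < u.length)

/-- `u` is strongly less than `v`: they share a common prefix followed by
strictly comparable letters. -/
def StrongLt (u v : List α) : Prop :=
  ∃ (p s t : List α) (a b : α), a < b ∧ u = p ++ a :: s ∧ v = p ++ b :: t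

/- ### Auxiliary lemmas -/

lemma my_length_wpow (x : List α) (e : ℕ) : (wpow x e).length = e * x.length := by
  simp [wpow, List.length_flatten, Nat.mul_comm]

lemma my_wpow_succ (x : List α) (e : ℕ) : wpow x (e + 1) = x ++ wpow x e := by
  simp [wpow, List.replicate_succ]

lemma my_getD_wpow (x : List α) (e n : ℕ) (h : n < e * x.length) :
    (wpow x e).getD n default = x.getD (n % x.length) default := by
  induction e generalizing n with
  | zero => simp at h
  | succ e ih =>
    rw [Nat.succ_mul] at h
    rw [my_wpow_succ]
    rcases Nat.lt_or_ge n x.length with hn | hn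
    · rw [List.getD_append _ _ _ _ hn, Nat.mod_eq_of_lt hn]
    · rw [List.getD_append_right _ _ _ _ hn, ih _ (by omega), Nat.mod_eq_sub_mod hn]

lemma my_infWord_getD (w : List α) (n : ℕ) (h : n < w.length) :
    infWord w n = w.getD n default := by
  simp [infWord, Nat.mod_eq_of_lt h]

lemma my_infWord_period (w : List α) (n : ℕ) :
    infWord w (w.length + n) = infWord w n := by
  simp [infWord, Nat.add_mod_left]

lemma my_lex_exists {l₁ l₂ : List α} (h : List.Lex (· < ·) l₁ l₂) :
    l₂.length < l₁.length →
    ∃ k, k < l₂.length ∧ (∀ m < k, l₁.getD m default = l₂.getD m default) ∧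
      l₁.getD k default < l₂.getD k default := by
  induction h with
  | nil => intro h; simp at h
  | @cons a t₁ t₂ h ih =>
    intro hl
    obtain ⟨k, hk, hag, hlt⟩ := ih (by simpa using hl)
    refine ⟨k + 1, by simpa using hk, ?_, by simpa using hlt⟩
    intro m hm
    cases m with
    | zero => simp
    | succ m => simpa using hag m (by omega)
  | @rel a b t₁ t₂ hab =>
    intro _
    exact ⟨0, by simp, by simp, by simpa using hab⟩

/-- Claim 1, first case: for proper non-empty prefixes `u, v` of a Lyndon
word `x` with `u^∞ = v^∞` and `|u| > |v|`, one has
`(x^e u)^∞ < (x^e v)^∞` for all `e ≥ 1`, hence `x^e u ≺ x^e v`. -/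
theorem claim1_equal_powers {α : Type*} [LinearOrder α] [Inhabited α]
    (x u v : List α) (hx : IsLyndon x)
    (hu : u ≠ []) (hu' : u ≠ x) (hupx : u <+: x)
    (hv : v ≠ []) (hv' : v ≠ x) (hvpx : v <+: x)
    (heq : infWord u = infWord v) (hlen : v.length < u.length) :
    ∀ e : ℕ, 1 ≤ e →
      InfLt (infWord (wpow x e ++ u)) (infWord (wpow x e ++ v)) ∧
      Prec (wpow x e ++ u) (wpow x e ++ v) := by
  intro e he
  set X := x.length with hXdef
  set U := u.length with hUdef
  set V := v.length with hVdef
  set E := e * X with hEdef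
  have hXpos : 0 < X := List.length_pos_iff.mpr hx.1
  have hUpos : 0 < U := List.length_pos_iff.mpr hu
  have hVpos : 0 < V := List.length_pos_iff.mpr hv
  have hUX : U < X := by
    rcases Nat.lt_or_ge U X with h | h
    · exact h
    · exact absurd (hupx.eq_of_length (le_antisymm hupx.length_le h)) hu'
  have hXE : X ≤ E := by
    calc X = 1 * X := (one_mul X).symm
    _ ≤ e * X := Nat.mul_le_mul_right X he
  set δ := U - V with hδdef
  have hδpos : 0 < δ := by omega
  have hδX : δ < X := by omega
  -- apply the Lyndon property to the suffix `x.drop δ`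
  have hdroplen : (x.drop δ).length = X - δ := by simp [hXdef]
  have hlex : List.Lex (· < ·) x (x.drop δ) := by
    apply hx.2
    · intro h
      rw [h] at hdroplen
      simp at hdroplen
      omega
    · intro h
      have := congrArg List.length h
      rw [hdroplen] at this
      omega
    · exact List.drop_suffix _ _
  obtain ⟨j, hjlt, hag, hltj⟩ := my_lex_exists hlex (by omega)
  rw [hdroplen] at hjlt
  -- rewrite getD of drop
  have hdrop_getD : ∀ m, m < X - δ → (x.drop δ).getD m default = x.getD (δ + m) default := by
    intro m hm
    rw [List.getD_eq_getElem _ _ (by omega), List.getD_eq_getElem _ _ (by omega)]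
    simp [List.getElem_drop]
  have hag' : ∀ m < j, x.getD m default = x.getD (δ + m) default := by
    intro m hm
    rw [← hdrop_getD m (by omega)]; exact hag m hm
  have hltj' : x.getD j default < x.getD (δ + j) default := by
    rw [← hdrop_getD j hjlt]; exact hltj
  -- prefix facts
  obtain ⟨ru, hru⟩ := hupx
  obtain ⟨rv, hrv⟩ := hvpx
  have hux : ∀ m, m < U → u.getD m default = x.getD m default := by
    intro m hm
    rw [← hru, List.getD_append _ _ _ _ hm]
  -- infWord facts for u and v
  have hfu : ∀ m, m < U → infWord u m = u.getD m default := fun m hm =>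
    my_infWord_getD u m hm
  have hfv : ∀ m, m < V → infWord v m = v.getD m default := fun m hm =>
    my_infWord_getD v m hm
  have hvperiod : ∀ m, infWord v (V + m) = infWord v m := fun m =>
    my_infWord_period v m
  -- lengths
  set L := infWord (wpow x e ++ u) with hLdef
  set R := infWord (wpow x e ++ v) with hRdef
  have hlenL : (wpow x e ++ u).length = E + U := by
    simp [my_length_wpow, hEdef, hXdef, hUdef]
  have hlenR : (wpow x e ++ v).length = E + V := by
    simp [my_length_wpow, hEdef, hXdef, hVdef]
  -- value lemmas
  have hL_lt : ∀ m, m < E → L m = x.getD (m % X) default := by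
    intro m hm
    rw [hLdef, my_infWord_getD _ m (by omega),
      List.getD_append _ _ _ _ (by rw [my_length_wpow]; exact hm), my_getD_wpow x e m hm]
  have hR_lt : ∀ m, m < E → R m = x.getD (m % X) default := by
    intro m hm
    rw [hRdef, my_infWord_getD _ m (by omega),
      List.getD_append _ _ _ _ (by rw [my_length_wpow]; exact hm), my_getD_wpow x e m hm]
  have hL_mid : ∀ m, E ≤ m → m < E + U → L m = u.getD (m - E) default := by
    intro m hm1 hm2
    rw [hLdef, my_infWord_getD _ m (by omega),
      List.getD_append_right _ _ _ _ (by rw [my_length_wpow]; exact hm1), my_length_wpow]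
  have hR_mid : ∀ m, E ≤ m → m < E + V → R m = v.getD (m - E) default := by
    intro m hm1 hm2
    rw [hRdef, my_infWord_getD _ m (by omega),
      List.getD_append_right _ _ _ _ (by rw [my_length_wpow]; exact hm1), my_length_wpow]
  have hL_hi : ∀ m, E + U ≤ m → m - (E + U) < X → L m = x.getD (m - (E + U)) default := by
    intro m hm1 hm2
    have hper := my_infWord_period (wpow x e ++ u) (m - (E + U))
    rw [hlenL] at hper
    have hmeq : E + U + (m - (E + U)) = m := by omega
    rw [hmeq] at hper
    rw [hLdef, hper, ← hLdef, hL_lt _ (by omega), Nat.mod_eq_of_lt (by omega)]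
  have hR_hi : ∀ m, E + V ≤ m → m - (E + V) < X → R m = x.getD (m - (E + V)) default := by
    intro m hm1 hm2
    have hper := my_infWord_period (wpow x e ++ v) (m - (E + V))
    rw [hlenR] at hper
    have hmeq : E + V + (m - (E + V)) = m := by omega
    rw [hmeq] at hper
    rw [hRdef, hper, ← hRdef, hR_lt _ (by omega), Nat.mod_eq_of_lt (by omega)]
  -- the witness position
  set n₀ := E + U + j with hn₀def
  have key_eq : ∀ m, m < n₀ → L m = R m := by
    intro m hm
    rcases Nat.lt_or_ge m E with h1 | h1
    · rw [hL_lt m h1, hR_lt m h1]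
    rcases Nat.lt_or_ge m (E + V) with h2 | h2
    · rw [hL_mid m h1 (by omega), hR_mid m h1 h2]
      have hmV : m - E < V := by omega
      rw [← hfu _ (by omega), ← hfv _ hmV, heq]
    rcases Nat.lt_or_ge m (E + U) with h3 | h3
    · -- E + V ≤ m < E + U
      rw [hL_mid m h1 h3, hR_hi m h2 (by omega)]
      have hl2 : m - (E + V) < U := by omega
      calc u.getD (m - E) default = infWord u (m - E) := (hfu _ (by omega)).symm
        _ = infWord v (m - E) := by rw [heq]
        _ = infWord v (V + (m - (E + V))) := by congr 1; omega
        _ = infWord v (m - (E + V)) := hvperiod _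
        _ = infWord u (m - (E + V)) := by rw [heq]
        _ = u.getD (m - (E + V)) default := hfu _ hl2
        _ = x.getD (m - (E + V)) default := hux _ hl2
    · -- E + U ≤ m < n₀
      have hj'' : m - (E + U) < j := by omega
      rw [hL_hi m h3 (by omega), hR_hi m h2 (by omega)]
      have : m - (E + V) = δ + (m - (E + U)) := by omega
      rw [this]
      exact hag' _ hj''
  have key_lt : L n₀ < R n₀ := by
    rw [hL_hi n₀ (by omega) (by omega), hR_hi n₀ (by omega) (by omega)]
    have h1 : n₀ - (E + U) = j := by omega
    have h2 : n₀ - (E + V) = δ + j := by omega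
    rw [h1, h2]
    exact hltj'
  have hinf : InfLt L R := ⟨n₀, key_eq, key_lt⟩
  exact ⟨hinf, Or.inl hinf⟩
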